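/- arXiv:2007.08765 — 2 statements merged into one kernel-verified Lean document; each statement's English description precedes it below -/
import Mathlib

section
/- For the Sel'kov isolated-cell system with efflux, a necessary condition for the existence of α > 0 with tr(J) = 0 (Hopf bifurcation boundary) is 0 < μ < χ^{3/2}/√ζ; equivalently, if μ ≥ χ^{3/2}/√ζ then for all α > 0 one has tr(J) < 0 fails to admit a zero crossing, i.e. the expression α = −μ²/χ² + (1/(2ζ))(−χ + √(χ² + 8ζμ²/χ)) is nonpositive. -/
open Real

/-- The Hopf bifurcation boundary value αHB(μ) = −μ²/χ² + (1/(2ζ))(−χ + √(χ² + 8ζμ²/χ))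
is positive if and only if 0 < μ < χ^{3/2}/√ζ; in particular if μ ≥ χ^{3/2}/√ζ then
αHB(μ) ≤ 0, so no positive α with tr(J) = 0 exists. -/
theorem selkov_hopf_mu_window
    (χ ζ μ : ℝ) (hχ : 0 < χ) (hζ : 0 < ζ) (hμ : 0 < μ)
    (αHB : ℝ)
    (hα : αHB = -(μ ^ 2 / χ ^ 2) + (1 / (2 * ζ)) *
            (-χ + Real.sqrt (χ ^ 2 + 8 * ζ * μ ^ 2 / χ))) :
    (0 < αHB ↔ μ < Real.sqrt (χ ^ 3) / Real.sqrt ζ) ∧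
    (Real.sqrt (χ ^ 3) / Real.sqrt ζ ≤ μ → αHB ≤ 0) := by
  have harg : (0:ℝ) ≤ χ ^ 2 + 8 * ζ * μ ^ 2 / χ := by positivity
  set s := Real.sqrt (χ ^ 2 + 8 * ζ * μ ^ 2 / χ) with hs
  have hs0 : 0 ≤ s := Real.sqrt_nonneg _
  have hs2 : s ^ 2 = χ ^ 2 + 8 * ζ * μ ^ 2 / χ := Real.sq_sqrt harg
  have hmul : 2 * ζ * αHB = -(2 * ζ * μ ^ 2 / χ ^ 2) + (-χ + s) := by
    rw [hα]; field_simp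
  have h2ζ : (0:ℝ) < 2 * ζ := by positivity
  -- key iff 1: 0 < αHB ↔ χ + 2ζμ²/χ² < s
  have key1 : 0 < αHB ↔ χ + 2 * ζ * μ ^ 2 / χ ^ 2 < s := by
    constructor
    · intro h
      have := mul_pos h2ζ h
      linarith [hmul]
    · intro h
      have : 0 < 2 * ζ * αHB := by linarith
      exact mul_pos_iff.mp this |>.elim (fun h => h.2)
        (fun h => absurd h.1 (by linarith))
  -- key iff 2: χ + 2ζμ²/χ² < s ↔ ζμ² < χ³
  have key2 : χ + 2 * ζ * μ ^ 2 / χ ^ 2 < s ↔ ζ * μ ^ 2 < χ ^ 3 := by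
    have hb : (0:ℝ) ≤ χ + 2 * ζ * μ ^ 2 / χ ^ 2 := by positivity
    rw [hs, Real.lt_sqrt hb]
    have e1 : (χ + 2 * ζ * μ ^ 2 / χ ^ 2) ^ 2 * χ ^ 4 = (χ ^ 3 + 2 * ζ * μ ^ 2) ^ 2 := by
      field_simp
    have e2 : (χ ^ 2 + 8 * ζ * μ ^ 2 / χ) * χ ^ 4 = χ ^ 6 + 8 * ζ * μ ^ 2 * χ ^ 3 := by
      field_simp
    have hχ4 : (0:ℝ) < χ ^ 4 := by positivity
    constructor
    · intro h
      have h' := (mul_lt_mul_iff_of_pos_right hχ4).mpr h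
      rw [e1, e2] at h'
      nlinarith [mul_pos hζ (pow_pos hμ 2), pow_pos hχ 3]
    · intro h
      have h4 : (χ ^ 3 + 2 * ζ * μ ^ 2) ^ 2 < χ ^ 6 + 8 * ζ * μ ^ 2 * χ ^ 3 := by
        nlinarith [mul_pos hζ (pow_pos hμ 2)]
      rw [← e1, ← e2] at h4
      exact lt_of_mul_lt_mul_right h4 hχ4.le
  -- key iff 3: μ < √(χ³)/√ζ ↔ ζμ² < χ³
  have key3 : μ < Real.sqrt (χ ^ 3) / Real.sqrt ζ ↔ ζ * μ ^ 2 < χ ^ 3 := by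
    rw [← Real.sqrt_div (by positivity) ζ, Real.lt_sqrt hμ.le, lt_div_iff₀ hζ, mul_comm]
  refine ⟨key1.trans (key2.trans key3.symm), fun h => ?_⟩
  have : ¬ (0 < αHB) := by
    rw [key1, key2, ← key3]
    exact not_lt.mpr h
  linarith [not_lt.mp this]
end

section
/- With M as in the ring-and-center block structure (upper-left block 2πνG + M₀I with Ge = ωe, off-block entries 2πνg with g ≠ 0, corner entry 2πνR + M_m), the vector c = (e, γ)ᵀ with γ = −(ω + M₀/(2πν))/g is in the kernel of M if and only if ℋ(λ) := (ω + M₀/(2πν))(R + M_m/(2πν)) − (m−1)g² = 0. -/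
open Real Matrix

/-- In-phase mode of the ring-and-center GCEP matrix: with m = n+1 cells (n = m−1 ≥ 2),
the vector c = (e, γ)ᵀ with γ = −(ω + M₀/(2πν))/g lies in the kernel of M if and only
if ℋ(λ) = (ω + M₀/(2πν))(R + M_m/(2πν)) − (m−1)g² = 0. -/
theorem ring_center_inphase_kernel_iff
    (n : ℕ) (hn : 2 ≤ n) (ν : ℝ) (hν : ν ≠ 0)
    (G : Matrix (Fin n) (Fin n) ℂ) (hGsym : G.IsSymm)
    (ω M₀ Mm g R : ℂ) (hg : g ≠ 0)
    (hGe : G.mulVec (fun _ => 1) = ω • (fun _ => (1 : ℂ)))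
    (M : Matrix (Fin n ⊕ Unit) (Fin n ⊕ Unit) ℂ)
    (hM : M = Matrix.fromBlocks
        (((2 * π * ν : ℝ) : ℂ) • G + M₀ • (1 : Matrix (Fin n) (Fin n) ℂ))
        (fun _ _ => ((2 * π * ν : ℝ) : ℂ) * g)
        (fun _ _ => ((2 * π * ν : ℝ) : ℂ) * g)
        (fun _ _ => ((2 * π * ν : ℝ) : ℂ) * R + Mm))
    (γ : ℂ) (hγ : γ = -(ω + M₀ / ((2 * π * ν : ℝ) : ℂ)) / g) :
    M.mulVec (Sum.elim (fun _ => 1) (fun _ => γ)) = 0 ↔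
      (ω + M₀ / ((2 * π * ν : ℝ) : ℂ)) * (R + Mm / ((2 * π * ν : ℝ) : ℂ))
        - (n : ℂ) * g ^ 2 = 0 := by
  have ha0 : (((2 * π * ν : ℝ) : ℂ)) ≠ 0 := by
    exact_mod_cast mul_ne_zero (mul_ne_zero two_ne_zero Real.pi_ne_zero) hν
  set a : ℂ := ((2 * π * ν : ℝ) : ℂ) with ha
  subst hM hγ
  erw [Matrix.fromBlocks_mulVec]
  simp only [Sum.elim_comp_inl, Sum.elim_comp_inr]
  have h1 : ((a • G + M₀ • (1 : Matrix (Fin n) (Fin n) ℂ)).mulVec (fun _ => 1)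
      + Matrix.mulVec (fun (_ : Fin n) (_ : Unit) => a * g) (fun _ => -(ω + M₀ / a) / g)) = 0 := by
    funext i
    simp [Matrix.add_mulVec, Matrix.smul_mulVec, hGe, Matrix.one_mulVec,
      Matrix.mulVec, dotProduct, Pi.add_apply]
    field_simp
    ring
  rw [h1]
  constructor
  · intro h
    have h2 := congrFun h (Sum.inr ())
    simp [Matrix.mulVec, dotProduct, Finset.sum_const] at h2
    field_simp at h2 ⊢
    linear_combination -h2
  · intro h
    funext x
    cases x with
    | inl i => simp
    | inr u =>
      simp [Matrix.mulVec, dotProduct, Finset.sum_const]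
      field_simp at h ⊢
      linear_combination -h
end
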